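/- The Hilbert matrix H_n with entries H_{ij} = 1/(i + j - 1) is strictly totally positive (all its minors are positive). -/
import Mathlib

open Finset Matrix

/-- Determinant of a Cauchy matrix with strictly increasing positive data is positive. -/
lemma cauchy_det_pos : ∀ (m : ℕ) (x y : Fin m → ℝ), StrictMono x → StrictMono y →
    (∀ i j, 0 < x i + y j) → 0 < (Matrix.of fun i j => 1 / (x i + y j)).det := by
  intro m
  induction m with
  | zero => intro x y _ _ _; simp
  | succ m ih =>
    intro x y hx hy hpos
    set l : Fin (m + 1) := Fin.last m with hl
    have hne : ∀ i j, x i + y j ≠ 0 := fun i j => (hpos i j).ne'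
    have hlt : ∀ i : Fin (m + 1), i ≠ l → i < l := fun i hi =>
      lt_of_le_of_ne (Fin.le_last i) hi
    -- step 1: subtract last row from every other row
    set B : Matrix (Fin (m + 1)) (Fin (m + 1)) ℝ :=
      Matrix.of fun i j => if i = l then 1 / (x l + y j)
        else 1 / (x i + y j) - 1 / (x l + y j) with hB
    have h1 : (Matrix.of fun i j : Fin (m + 1) => 1 / (x i + y j)).det = B.det := by
      apply Matrix.det_eq_of_forall_row_eq_smul_add_const
        (fun i => if i = l then 0 else 1) l (if_pos rfl)
      intro i j
      by_cases h : i = l <;> simp [hB, h]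
    -- step 2: factor rows and columns
    set E : Matrix (Fin (m + 1)) (Fin (m + 1)) ℝ :=
      Matrix.of fun i j => if i = l then 1 else 1 / (x i + y j) with hE
    set R : Matrix (Fin (m + 1)) (Fin (m + 1)) ℝ :=
      Matrix.of fun i j => (if i = l then 1 else x l - x i) * E i j with hR
    have h2 : B = Matrix.of fun i j => (1 / (x l + y j)) * R i j := by
      ext i j
      by_cases h : i = l
      · simp [hB, hE, hR, h]
      · simp only [hB, hE, hR, Matrix.of_apply, if_neg h]
        rw [div_sub_div _ _ (hne i j) (hne l j), mul_one_div, one_div_mul_eq_div, div_div]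
        congr 1 <;> ring
    -- step 3: subtract last column from every other column (on E)
    set F : Matrix (Fin (m + 1)) (Fin (m + 1)) ℝ :=
      Matrix.of fun i j => if j = l then E i l else E i j - E i l with hF
    have h3 : E.det = F.det := by
      rw [← Matrix.det_transpose E, ← Matrix.det_transpose F]
      apply Matrix.det_eq_of_forall_row_eq_smul_add_const
        (fun j => if j = l then 0 else 1) l (if_pos rfl)
      intro j i
      by_cases h : j = l <;> simp [hF, h]
    -- step 4: factor rows and columns of F
    set G : Matrix (Fin (m + 1)) (Fin (m + 1)) ℝ :=
      Matrix.of fun i j => if i = l then (if j = l then 1 else 0)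
        else if j = l then 1 else 1 / (x i + y j) with hG
    set S : Matrix (Fin (m + 1)) (Fin (m + 1)) ℝ :=
      Matrix.of fun i j => (if i = l then 1 else 1 / (x i + y l)) * G i j with hS
    have h4 : F = Matrix.of fun i j => (if j = l then 1 else y l - y j) * S i j := by
      ext i j
      by_cases h : i = l <;> by_cases h' : j = l
      · simp [hF, hE, hG, hS, h, h']
      · simp [hF, hE, hG, hS, h, h']
      · simp [hF, hE, hG, hS, h, h']
      · simp only [hF, hE, hG, hS, Matrix.of_apply, if_neg h, if_neg h']
        rw [div_sub_div _ _ (hne i j) (hne i l), one_div_mul_one_div, mul_one_div]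
        congr 1 <;> ring
    -- step 5: expand det G along the last row
    have h5 : G.det = (Matrix.of fun i j : Fin m =>
        1 / (x i.castSucc + y j.castSucc)).det := by
      rw [Matrix.det_succ_row G l]
      have : ∀ j : Fin (m + 1), j ≠ l →
          (-1 : ℝ) ^ ((l : ℕ) + (j : ℕ)) * G l j * (G.submatrix l.succAbove j.succAbove).det
            = 0 := by
        intro j hj
        simp [hG, hj]
      rw [Finset.sum_eq_single l (fun j _ hj => this j hj) (by simp)]
      have hGl : G l l = 1 := by simp [hG]
      rw [hGl]
      have hsub : G.submatrix l.succAbove l.succAbove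
          = Matrix.of fun i j : Fin m => 1 / (x i.castSucc + y j.castSucc) := by
        ext i j
        have hsa : l.succAbove = Fin.castSucc := Fin.succAbove_last
        have hic : (i.castSucc : Fin (m + 1)) ≠ l := (Fin.castSucc_lt_last i).ne
        have hjc : (j.castSucc : Fin (m + 1)) ≠ l := (Fin.castSucc_lt_last j).ne
        simp [hG, hsa, hic, hjc]
      rw [hsub]
      have : (-1 : ℝ) ^ ((l : ℕ) + (l : ℕ)) = 1 :=
        Even.neg_one_pow ⟨(l : ℕ), rfl⟩
      rw [this, one_mul, one_mul]
    have hGpos : 0 < G.det := by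
      rw [h5]
      apply ih
      · exact fun a b h => hx (by simpa using h)
      · exact fun a b h => hy (by simpa using h)
      · exact fun i j => hpos _ _
    -- combine
    rw [h1, h2, Matrix.det_mul_row, hR, Matrix.det_mul_column, h3, h4,
      Matrix.det_mul_row, hS, Matrix.det_mul_column]
    have p1 : 0 < ∏ j, 1 / (x l + y j) :=
      Finset.prod_pos fun j _ => one_div_pos.mpr (hpos l j)
    have p2 : 0 < ∏ i, (if i = l then (1 : ℝ) else x l - x i) := by
      apply Finset.prod_pos
      intro i _
      by_cases h : i = l
      · simp [h]
      · simp only [if_neg h]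
        exact sub_pos.mpr (hx (hlt i h))
    have p3 : 0 < ∏ j, (if j = l then (1 : ℝ) else y l - y j) := by
      apply Finset.prod_pos
      intro j _
      by_cases h : j = l
      · simp [h]
      · simp only [if_neg h]
        exact sub_pos.mpr (hy (hlt j h))
    have p4 : 0 < ∏ i, (if i = l then (1 : ℝ) else 1 / (x i + y l)) := by
      apply Finset.prod_pos
      intro i _
      by_cases h : i = l
      · simp [h]
      · simp only [if_neg h]
        exact one_div_pos.mpr (hpos i l)
    exact mul_pos p1 (mul_pos p2 (mul_pos p3 (mul_pos p4 hGpos)))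

/-- A matrix is strictly totally positive if every minor is positive. -/
def StrictlyTotallyPositive {n : ℕ} (A : Matrix (Fin n) (Fin n) ℝ) : Prop :=
  ∀ (k : ℕ) (f g : Fin k → Fin n), StrictMono f → StrictMono g →
    0 < ((A.submatrix f g).det)

theorem hilbert_strictlyTotallyPositive (n : ℕ) :
    StrictlyTotallyPositive
      (Matrix.of fun i j : Fin n => (1 : ℝ) / ((i : ℕ) + (j : ℕ) + 1)) := by
  intro k f g hf hg
  have heq : (Matrix.of fun i j : Fin n => (1 : ℝ) / ((i : ℕ) + (j : ℕ) + 1)).submatrix f g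
      = Matrix.of fun i j : Fin k => 1 / (((f i : ℕ) : ℝ) + (((g j : ℕ) : ℝ) + 1)) := by
    ext i j
    simp only [Matrix.submatrix_apply, Matrix.of_apply]
    push_cast
    ring_nf
  rw [heq]
  apply cauchy_det_pos k (fun i => ((f i : ℕ) : ℝ)) (fun j => ((g j : ℕ) : ℝ) + 1)
  · intro a b h
    show ((f a : ℕ) : ℝ) < ((f b : ℕ) : ℝ)
    exact_mod_cast hf h
  · intro a b h
    show ((g a : ℕ) : ℝ) + 1 < ((g b : ℕ) : ℝ) + 1
    have : (g a : ℕ) < (g b : ℕ) := hg h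
    have : ((g a : ℕ) : ℝ) < ((g b : ℕ) : ℝ) := by exact_mod_cast this
    linarith
  · intro i j
    positivity
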